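/- (Analytic core of Proposition 4.8.) Let Φ be a (sub)critical branching mechanism (α ≥ 0), not identically zero, satisfying Assumption H2: ∫_1^∞ dλ/Φ(λ) < ∞ (note that Φ(λ) > 0 for all λ > 0 in this case, and ∫_{0+}^1 dλ/Φ(λ) = ∞). Then there is a unique function v̄ : (0,∞) → (0,∞) with ∫_{v̄(t)}^∞ dλ/Φ(λ) = t for all t > 0; v̄ is strictly decreasing with v̄(t) → 0 as t → ∞ and satisfies v̄'(t) = −Φ(v̄(t)). Moreover, for every t > 0 and all x, y > 0, lim_{r→∞} [ y e^{−y v̄(r−t)} Φ(v̄(r−t)) ] / [ x e^{−x v̄(r)} Φ(v̄(r)) ] = (y/x) e^{αt}. -/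

import Mathlib

set_option maxHeartbeats 1000000


open MeasureTheory Filter Set

/-- The branching mechanism `Φ(λ) = αλ + βλ² + ∫_{(0,∞)} (e^{-λθ} - 1 + λθ) π(dθ)`. -/
noncomputable def Phi (α β : ℝ) (π : Measure ℝ) (lam : ℝ) : ℝ :=
  α * lam + β * lam ^ 2 + ∫ θ, (Real.exp (-lam * θ) - 1 + lam * θ) ∂π


lemma pt_nonneg (u : ℝ) : 0 ≤ Real.exp (-u) - 1 + u := by
  have := Real.add_one_le_exp (-u); linarith

lemma pt_pos {u : ℝ} (hu : 0 < u) : 0 < Real.exp (-u) - 1 + u := by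
  have := Real.add_one_lt_exp (x := -u) (by linarith); linarith

lemma pt_le_lin {u : ℝ} (hu : 0 ≤ u) : Real.exp (-u) - 1 + u ≤ u := by
  have : Real.exp (-u) ≤ 1 := by
    rw [show (1:ℝ) = Real.exp 0 by simp]; exact Real.exp_le_exp.2 (by linarith)
  linarith

lemma pt_le_quad {u : ℝ} (hu : 0 ≤ u) : Real.exp (-u) - 1 + u ≤ u ^ 2 / 2 := by
  have key : ∀ s : ℝ, HasDerivAt (fun z => z ^ 2 / 2 - (Real.exp (-z) - 1 + z))
      (s - (1 - Real.exp (-s))) s := by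
    intro s
    have h1 : HasDerivAt (fun z : ℝ => Real.exp (-z)) (-Real.exp (-s)) s := by
      have := (hasDerivAt_neg' s).exp; rw [mul_neg_one] at this; exact this
    have h2 : HasDerivAt (fun z : ℝ => z ^ 2 / 2) s s := by
      simpa using ((hasDerivAt_pow 2 s).div_const 2)
    have h := h2.sub ((h1.sub_const 1).add (hasDerivAt_id s))
    exact h.congr_deriv (by ring)
  have hmono : MonotoneOn (fun z => z ^ 2 / 2 - (Real.exp (-z) - 1 + z)) (Ici 0) := by
    apply monotoneOn_of_deriv_nonneg (convex_Ici 0)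
    · exact ((continuous_pow 2).div_const 2 |>.sub
        (((Real.continuous_exp.comp continuous_neg).sub continuous_const).add continuous_id)).continuousOn
    · exact fun s _ => ((key s).differentiableAt).differentiableWithinAt
    · intro s hs
      rw [(key s).deriv]
      have := Real.add_one_le_exp (-s)
      linarith
  have := hmono (self_mem_Ici) hu hu
  simp at this; linarith

lemma pt_mono {a b : ℝ} (ha : 0 ≤ a) (hab : a ≤ b) :
    Real.exp (-a) - 1 + a ≤ Real.exp (-b) - 1 + b := by
  have h1 : Real.exp (-b) = Real.exp (-a) * Real.exp (a - b) := by
    rw [← Real.exp_add]; ring_nf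
  have h2 : a - b + 1 ≤ Real.exp (a - b) := Real.add_one_le_exp _
  have h3 : Real.exp (-a) ≤ 1 := by
    rw [show (1:ℝ) = Real.exp 0 by simp]; exact Real.exp_le_exp.2 (by linarith)
  have h4 : (0:ℝ) < Real.exp (-a) := Real.exp_pos _
  nlinarith [Real.exp_pos (a - b)]

lemma pt_one_sub_exp_le_one {u : ℝ} : 1 - Real.exp (-u) ≤ 1 := by
  have := Real.exp_pos (-u); linarith

lemma pt_one_sub_exp_le {u : ℝ} : 1 - Real.exp (-u) ≤ u := by
  have := Real.add_one_le_exp (-u); linarith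

lemma pt_one_sub_exp_nonneg {u : ℝ} (hu : 0 ≤ u) : 0 ≤ 1 - Real.exp (-u) := by
  have : Real.exp (-u) ≤ 1 := by
    rw [show (1:ℝ) = Real.exp 0 by simp]; exact Real.exp_le_exp.2 (by linarith)
  linarith

lemma min_sq_of_le_one {θ : ℝ} (h0 : 0 < θ) (h1 : θ ≤ 1) : min θ (θ ^ 2) = θ ^ 2 :=
  min_eq_right (by nlinarith)

lemma min_sq_of_ge_one {θ : ℝ} (h1 : 1 ≤ θ) : min θ (θ ^ 2) = θ :=
  min_eq_left (by nlinarith)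

lemma min_sq_nonneg {θ : ℝ} (h0 : 0 < θ) : 0 ≤ min θ (θ ^ 2) :=
  le_min h0.le (by positivity)


noncomputable def Psi (α β : ℝ) (π : Measure ℝ) (lam : ℝ) : ℝ :=
  α + 2 * β * lam + ∫ θ, θ * (1 - Real.exp (-lam * θ)) ∂π

section main
variable {α β : ℝ} {π : Measure ℝ}

lemma hae (hsupp : π (Set.Iic 0) = 0) : ∀ᵐ θ ∂π, 0 < θ := by
  rw [ae_iff]
  convert hsupp using 2
  ext θ; simp [not_lt]

lemma int_F (hsupp : π (Set.Iic 0) = 0)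
    (hint : Integrable (fun θ => min θ (θ ^ 2)) π) {lam : ℝ} (hlam : 0 ≤ lam) :
    Integrable (fun θ => Real.exp (-lam * θ) - 1 + lam * θ) π := by
  apply Integrable.mono' (hint.const_mul (lam + lam ^ 2))
  · exact (((Real.continuous_exp.comp (continuous_const.mul continuous_id)).sub
      continuous_const).add (continuous_const.mul continuous_id)).aestronglyMeasurable
  · filter_upwards [hae hsupp] with θ hθ
    have hu : 0 ≤ lam * θ := by positivity
    rw [Real.norm_eq_abs, abs_of_nonneg (by rw [neg_mul]; exact pt_nonneg _)]
    rw [neg_mul]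
    rcases le_or_gt θ 1 with h1 | h1
    · rw [min_sq_of_le_one hθ h1]
      have := pt_le_quad hu
      nlinarith
    · rw [min_sq_of_ge_one h1.le]
      have := pt_le_lin hu
      nlinarith

lemma int_F' (hsupp : π (Set.Iic 0) = 0)
    (hint : Integrable (fun θ => min θ (θ ^ 2)) π) {lam : ℝ} (hlam : 0 ≤ lam) :
    Integrable (fun θ => θ * (1 - Real.exp (-lam * θ))) π := by
  apply Integrable.mono' (hint.const_mul (1 + lam))
  · exact (continuous_id.mul (continuous_const.sub
      (Real.continuous_exp.comp (continuous_const.mul continuous_id)))).aestronglyMeasurable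
  · filter_upwards [hae hsupp] with θ hθ
    have hu : 0 ≤ lam * θ := by positivity
    rw [neg_mul, Real.norm_eq_abs, abs_of_nonneg
      (mul_nonneg hθ.le (pt_one_sub_exp_nonneg hu))]
    rcases le_or_gt θ 1 with h1 | h1
    · rw [min_sq_of_le_one hθ h1]
      have := pt_one_sub_exp_le (u := lam * θ)
      nlinarith
    · rw [min_sq_of_ge_one h1.le]
      have := pt_one_sub_exp_le_one (u := lam * θ)
      nlinarith

lemma I_nonneg (hsupp : π (Set.Iic 0) = 0) (lam : ℝ) :
    0 ≤ ∫ θ, (Real.exp (-lam * θ) - 1 + lam * θ) ∂π := by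
  apply integral_nonneg_of_ae
  filter_upwards [hae hsupp] with θ hθ
  rw [neg_mul]; exact pt_nonneg _

lemma Phi_nonneg (hα : 0 ≤ α) (hβ : 0 ≤ β) (hsupp : π (Set.Iic 0) = 0)
    {lam : ℝ} (hlam : 0 ≤ lam) : 0 ≤ Phi α β π lam := by
  have := I_nonneg (π := π) hsupp lam
  unfold Phi; positivity

lemma Phi_mono (hα : 0 ≤ α) (hβ : 0 ≤ β) (hsupp : π (Set.Iic 0) = 0)
    (hint : Integrable (fun θ => min θ (θ ^ 2)) π)
    {a b : ℝ} (ha : 0 ≤ a) (hab : a ≤ b) : Phi α β π a ≤ Phi α β π b := by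
  have hI : (∫ θ, (Real.exp (-a * θ) - 1 + a * θ) ∂π)
      ≤ ∫ θ, (Real.exp (-b * θ) - 1 + b * θ) ∂π := by
    apply integral_mono_ae (int_F hsupp hint ha) (int_F hsupp hint (ha.trans hab))
    filter_upwards [hae hsupp] with θ hθ
    rw [neg_mul, neg_mul]
    exact pt_mono (by positivity) (by nlinarith)
  have e1 : α * a ≤ α * b := mul_le_mul_of_nonneg_left hab hα
  have e2 : β * a ^ 2 ≤ β * b ^ 2 := mul_le_mul_of_nonneg_left (by nlinarith) hβ
  unfold Phi; linarith

lemma Phi_le (hβ : 0 ≤ β) (hsupp : π (Set.Iic 0) = 0)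
    (hint : Integrable (fun θ => min θ (θ ^ 2)) π)
    {lam : ℝ} (h0 : 0 < lam) (h1 : lam ≤ 1) :
    Phi α β π lam ≤ (α + β + ∫ θ, min θ (θ ^ 2) ∂π) * lam := by
  have hI : (∫ θ, (Real.exp (-lam * θ) - 1 + lam * θ) ∂π)
      ≤ ∫ θ, lam * min θ (θ ^ 2) ∂π := by
    apply integral_mono_ae (int_F hsupp hint h0.le) (hint.const_mul lam)
    filter_upwards [hae hsupp] with θ hθ
    have hu : 0 ≤ lam * θ := by positivity
    rw [neg_mul]
    rcases le_or_gt θ 1 with hc | hc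
    · rw [min_sq_of_le_one hθ hc]
      have := pt_le_quad hu
      nlinarith
    · rw [min_sq_of_ge_one hc.le]
      have := pt_le_lin hu
      nlinarith
  rw [integral_const_mul] at hI
  have e2 : β * lam ^ 2 ≤ β * lam := mul_le_mul_of_nonneg_left (by nlinarith) hβ
  unfold Phi; nlinarith

lemma Phi_pos (hα : 0 ≤ α) (hβ : 0 ≤ β) (hsupp : π (Set.Iic 0) = 0)
    (hint : Integrable (fun θ => min θ (θ ^ 2)) π)
    (hΦne : ∃ l : ℝ, 0 ≤ l ∧ Phi α β π l ≠ 0)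
    {lam : ℝ} (hlam : 0 < lam) : 0 < Phi α β π lam := by
  rcases (Phi_nonneg hα hβ hsupp hlam.le).lt_or_eq with h | h
  · exact h
  exfalso
  have hI := I_nonneg (π := π) hsupp lam
  have hα0 : α * lam = 0 := by unfold Phi at h; nlinarith
  have hβ0 : β * lam ^ 2 = 0 := by unfold Phi at h; nlinarith
  have hI0 : (∫ θ, (Real.exp (-lam * θ) - 1 + lam * θ) ∂π) = 0 := by
    unfold Phi at h; nlinarith
  have hαz : α = 0 := by
    rcases mul_eq_zero.1 hα0 with h' | h'; exact h'; exact absurd h' (by positivity)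
  have hβz : β = 0 := by
    rcases mul_eq_zero.1 hβ0 with h' | h'; exact h'; exact absurd h' (by positivity)
  have hzero : (fun θ => Real.exp (-lam * θ) - 1 + lam * θ) =ᵐ[π] 0 := by
    rw [← integral_eq_zero_iff_of_nonneg_ae ?_ (int_F hsupp hint hlam.le)]
    · exact hI0
    · filter_upwards [hae hsupp] with θ hθ
      rw [neg_mul]; exact pt_nonneg _
  have hfalse : ∀ᵐ θ ∂π, False := by
    filter_upwards [hae hsupp, hzero] with θ hθ hz
    have : 0 < Real.exp (-(lam * θ)) - 1 + lam * θ := pt_pos (by positivity)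
    rw [neg_mul] at hz
    simp only [Pi.zero_apply] at hz
    linarith
  have hπ0 : π = 0 := by
    have : π {a | ¬ False} = 0 := ae_iff.1 hfalse
    simpa using this
  rcases hΦne with ⟨l, _, hl⟩
  apply hl
  subst hπ0
  unfold Phi
  simp [hαz, hβz]

lemma C_pos (hα : 0 ≤ α) (hβ : 0 ≤ β) (hsupp : π (Set.Iic 0) = 0)
    (hint : Integrable (fun θ => min θ (θ ^ 2)) π)
    (hΦne : ∃ l : ℝ, 0 ≤ l ∧ Phi α β π l ≠ 0) :
    0 < α + β + ∫ θ, min θ (θ ^ 2) ∂π := by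
  have h1 := Phi_pos hα hβ hsupp hint hΦne (lam := 1) one_pos
  have h2 := Phi_le (α := α) hβ hsupp hint (lam := 1) one_pos le_rfl
  nlinarith

lemma hasDerivAt_Phi (hsupp : π (Set.Iic 0) = 0)
    (hint : Integrable (fun θ => min θ (θ ^ 2)) π)
    {lam : ℝ} (hlam : 0 < lam) :
    HasDerivAt (Phi α β π) (Psi α β π lam) lam := by
  have key : HasDerivAt (fun x => ∫ θ, (Real.exp (-x * θ) - 1 + x * θ) ∂π)
      (∫ θ, θ * (1 - Real.exp (-lam * θ)) ∂π) lam := by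
    have := (hasDerivAt_integral_of_dominated_loc_of_deriv_le (μ := π)
      (F := fun x θ => Real.exp (-x * θ) - 1 + x * θ)
      (F' := fun x θ => θ * (1 - Real.exp (-x * θ)))
      (x₀ := lam) (s := Metric.ball lam lam)
      (bound := fun θ => (1 + 2 * lam) * min θ (θ ^ 2)) (Metric.ball_mem_nhds lam hlam) ?_ ?_ ?_ ?_ ?_ ?_).2
    · exact this
    · filter_upwards with x
      exact (((Real.continuous_exp.comp (continuous_const.mul continuous_id)).sub
        continuous_const).add (continuous_const.mul continuous_id)).aestronglyMeasurable
    · exact int_F hsupp hint hlam.le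
    · exact (continuous_id.mul (continuous_const.sub
        (Real.continuous_exp.comp (continuous_const.mul continuous_id)))).aestronglyMeasurable
    · filter_upwards [hae hsupp] with θ hθ x hx
      rw [Metric.mem_ball, Real.dist_eq, abs_lt] at hx
      have hx0 : 0 < x := by linarith
      have hx2 : x ≤ 2 * lam := by linarith
      have hu : 0 ≤ x * θ := by positivity
      rw [neg_mul, Real.norm_eq_abs, abs_of_nonneg
        (mul_nonneg hθ.le (pt_one_sub_exp_nonneg hu))]
      rcases le_or_gt θ 1 with h1 | h1
      · rw [min_sq_of_le_one hθ h1]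
        have := pt_one_sub_exp_le (u := x * θ)
        nlinarith
      · rw [min_sq_of_ge_one h1.le]
        have := pt_one_sub_exp_le_one (u := x * θ)
        nlinarith
    · exact hint.const_mul _
    · filter_upwards with θ x hx
      have h1 : HasDerivAt (fun x : ℝ => -x * θ) (-θ) x := by
        simpa using ((hasDerivAt_id x).neg.mul_const θ)
      have h2 : HasDerivAt (fun x : ℝ => Real.exp (-x * θ)) (Real.exp (-x * θ) * (-θ)) x :=
        h1.exp
      have h3 : HasDerivAt (fun x : ℝ => x * θ) θ x := by
        simpa using (hasDerivAt_id x).mul_const θ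
      have := (h2.sub_const 1).add h3
      exact this.congr_deriv (by ring)
  have h1 : HasDerivAt (fun x : ℝ => α * x) α lam := by
    simpa using (hasDerivAt_id lam).const_mul α
  have h2 : HasDerivAt (fun x : ℝ => β * x ^ 2) (2 * β * lam) lam := by
    have := (hasDerivAt_pow 2 lam).const_mul β
    exact this.congr_deriv (by norm_num; ring)
  have := (h1.add h2).add key
  exact this

lemma Psi_nonneg (hα : 0 ≤ α) (hβ : 0 ≤ β) (hsupp : π (Set.Iic 0) = 0)
    {lam : ℝ} (hlam : 0 ≤ lam) : 0 ≤ Psi α β π lam := by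
  have hI : 0 ≤ ∫ θ, θ * (1 - Real.exp (-lam * θ)) ∂π := by
    apply integral_nonneg_of_ae
    filter_upwards [hae hsupp] with θ hθ
    rw [neg_mul]
    exact mul_nonneg hθ.le (pt_one_sub_exp_nonneg (by positivity))
  unfold Psi; positivity

lemma Psi_mono (hβ : 0 ≤ β) (hsupp : π (Set.Iic 0) = 0)
    (hint : Integrable (fun θ => min θ (θ ^ 2)) π)
    {a b : ℝ} (ha : 0 ≤ a) (hab : a ≤ b) : Psi α β π a ≤ Psi α β π b := by
  have hI : (∫ θ, θ * (1 - Real.exp (-a * θ)) ∂π) ≤ ∫ θ, θ * (1 - Real.exp (-b * θ)) ∂π := by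
    apply integral_mono_ae (int_F' hsupp hint ha) (int_F' hsupp hint (ha.trans hab))
    filter_upwards [hae hsupp] with θ hθ
    have : Real.exp (-b * θ) ≤ Real.exp (-a * θ) :=
      Real.exp_le_exp.2 (by nlinarith)
    nlinarith
  unfold Psi; nlinarith

lemma Psi_tendsto (hsupp : π (Set.Iic 0) = 0)
    (hint : Integrable (fun θ => min θ (θ ^ 2)) π) :
    Tendsto (Psi α β π) (nhdsWithin 0 (Set.Ioi 0)) (nhds α) := by
  have hI : Tendsto (fun lam => ∫ θ, θ * (1 - Real.exp (-lam * θ)) ∂π)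
      (nhdsWithin 0 (Set.Ioi 0)) (nhds 0) := by
    have key := tendsto_integral_filter_of_dominated_convergence
      (μ := π) (l := nhdsWithin (0:ℝ) (Set.Ioi 0))
      (F := fun lam θ => θ * (1 - Real.exp (-lam * θ))) (f := fun _ => (0:ℝ))
      (fun θ => min θ (θ ^ 2)) ?_ ?_ hint ?_
    · rw [integral_zero] at key; exact key
    · filter_upwards with x
      exact (continuous_id.mul (continuous_const.sub
        (Real.continuous_exp.comp (continuous_const.mul continuous_id)))).aestronglyMeasurable
    · have hev : Set.Ioo (0:ℝ) 1 ∈ nhdsWithin (0:ℝ) (Set.Ioi 0) :=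
        Ioo_mem_nhdsGT_of_mem (Set.left_mem_Ico.2 one_pos)
      filter_upwards [hev] with x hx
      filter_upwards [hae hsupp] with θ hθ
      have hx0 : 0 < x := hx.1
      have hx1 : x ≤ 1 := hx.2.le
      have hu : 0 ≤ x * θ := by positivity
      rw [neg_mul, Real.norm_eq_abs, abs_of_nonneg
        (mul_nonneg hθ.le (pt_one_sub_exp_nonneg hu))]
      rcases le_or_gt θ 1 with h1 | h1
      · rw [min_sq_of_le_one hθ h1]
        have := pt_one_sub_exp_le (u := x * θ)
        nlinarith
      · rw [min_sq_of_ge_one h1.le]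
        have := pt_one_sub_exp_le_one (u := x * θ)
        nlinarith
    · filter_upwards with θ
      have hc : Continuous (fun n : ℝ => θ * (1 - Real.exp (-n * θ))) :=
        continuous_const.mul (continuous_const.sub
          (Real.continuous_exp.comp ((continuous_id.neg).mul continuous_const)))
      have h0 := hc.tendsto 0
      have e : θ * (1 - Real.exp (-0 * θ)) = 0 := by norm_num
      rw [e] at h0
      exact h0.mono_left nhdsWithin_le_nhds
  have hlin : Tendsto (fun lam : ℝ => α + 2 * β * lam) (nhdsWithin 0 (Set.Ioi 0)) (nhds α) := by
    have hc : Continuous (fun lam : ℝ => α + 2 * β * lam) :=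
      continuous_const.add (continuous_const.mul continuous_id)
    have h0 := hc.tendsto 0
    have e : α + 2 * β * (0:ℝ) = α := by ring
    rw [e] at h0
    exact h0.mono_left nhdsWithin_le_nhds
  have h := hlin.add hI
  rw [add_zero] at h
  exact h

end main

noncomputable def Gfun (α β : ℝ) (π : Measure ℝ) (u : ℝ) : ℝ :=
  ∫ l in Set.Ioi u, (Phi α β π l)⁻¹

section G
variable {α β : ℝ} {π : Measure ℝ}
  (hα : 0 ≤ α) (hβ : 0 ≤ β) (hsupp : π (Set.Iic 0) = 0)
  (hint : Integrable (fun θ => min θ (θ ^ 2)) π)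
  (hΦne : ∃ l : ℝ, 0 ≤ l ∧ Phi α β π l ≠ 0)
  (hH2 : IntegrableOn (fun l => (Phi α β π l)⁻¹) (Set.Ioi 1))

include hα hβ hsupp hint hΦne

lemma f_contOn : ContinuousOn (fun l => (Phi α β π l)⁻¹) (Set.Ioi 0) := by
  intro u hu
  exact (((hasDerivAt_Phi hsupp hint hu).continuousAt).inv₀
    (ne_of_gt (Phi_pos hα hβ hsupp hint hΦne hu))).continuousWithinAt

lemma f_contAt {u : ℝ} (hu : 0 < u) : ContinuousAt (fun l => (Phi α β π l)⁻¹) u :=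
  ((hasDerivAt_Phi hsupp hint hu).continuousAt).inv₀
    (ne_of_gt (Phi_pos hα hβ hsupp hint hΦne hu))

include hH2

lemma int_f_Ioi {u : ℝ} (hu : 0 < u) :
    IntegrableOn (fun l => (Phi α β π l)⁻¹) (Set.Ioi u) := by
  rcases le_or_gt 1 u with h1 | h1
  · exact hH2.mono_set (Set.Ioi_subset_Ioi h1)
  · have hIoc : IntegrableOn (fun l => (Phi α β π l)⁻¹) (Set.Ioc u 1) := by
      have hc : ContinuousOn (fun l => (Phi α β π l)⁻¹) (Set.Icc u 1) :=
        (f_contOn hα hβ hsupp hint hΦne).mono (fun l hl => lt_of_lt_of_le hu hl.1)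
      exact hc.integrableOn_Icc.mono_set Set.Ioc_subset_Icc_self
    have : Set.Ioc u 1 ∪ Set.Ioi 1 = Set.Ioi u := Set.Ioc_union_Ioi_eq_Ioi h1.le
    rw [← this]
    exact hIoc.union hH2

lemma G_sub {u c : ℝ} (hu : 0 < u) (huc : u ≤ c) :
    Gfun α β π u = (∫ l in u..c, (Phi α β π l)⁻¹) + Gfun α β π c := by
  have hsplit : Set.Ioc u c ∪ Set.Ioi c = Set.Ioi u := Set.Ioc_union_Ioi_eq_Ioi huc
  have hdisj : Disjoint (Set.Ioc u c) (Set.Ioi c) := Set.Ioc_disjoint_Ioi le_rfl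
  have hint1 : IntegrableOn (fun l => (Phi α β π l)⁻¹) (Set.Ioc u c) :=
    (int_f_Ioi hα hβ hsupp hint hΦne hH2 hu).mono_set Set.Ioc_subset_Ioi_self
  have hint2 : IntegrableOn (fun l => (Phi α β π l)⁻¹) (Set.Ioi c) :=
    int_f_Ioi hα hβ hsupp hint hΦne hH2 (lt_of_lt_of_le hu huc)
  unfold Gfun
  rw [← hsplit, setIntegral_union hdisj measurableSet_Ioi hint1 hint2,
    intervalIntegral.integral_of_le huc]

lemma G_nonneg {u : ℝ} (hu : 0 < u) : 0 ≤ Gfun α β π u := by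
  apply setIntegral_nonneg measurableSet_Ioi
  intro l hl
  exact le_of_lt (inv_pos.2 (Phi_pos hα hβ hsupp hint hΦne (lt_trans hu hl)))

lemma G_interval_pos {u c : ℝ} (hu : 0 < u) (huc : u < c) :
    0 < ∫ l in u..c, (Phi α β π l)⁻¹ := by
  apply intervalIntegral.intervalIntegral_pos_of_pos_on _ _ huc
  · rw [intervalIntegrable_iff_integrableOn_Ioc_of_le huc.le]
    exact (int_f_Ioi hα hβ hsupp hint hΦne hH2 hu).mono_set Set.Ioc_subset_Ioi_self
  · intro x hx
    exact inv_pos.2 (Phi_pos hα hβ hsupp hint hΦne (lt_trans hu hx.1))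

lemma G_strictAnti : StrictAntiOn (Gfun α β π) (Set.Ioi 0) := by
  intro u hu c hc huc
  simp only [Set.mem_Ioi] at hu hc
  have := G_sub hα hβ hsupp hint hΦne hH2 hu huc.le
  have hpos := G_interval_pos hα hβ hsupp hint hΦne hH2 hu huc
  linarith

lemma G_pos {u : ℝ} (hu : 0 < u) : 0 < Gfun α β π u := by
  have h1 := G_sub hα hβ hsupp hint hΦne hH2 hu (le_of_lt (lt_add_one u))
  have h2 := G_interval_pos hα hβ hsupp hint hΦne hH2 hu (lt_add_one u)
  have h3 := G_nonneg hα hβ hsupp hint hΦne hH2 (lt_trans hu (lt_add_one u))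
  linarith

lemma hasDerivAt_G {u : ℝ} (hu : 0 < u) :
    HasDerivAt (Gfun α β π) (-(Phi α β π u)⁻¹) u := by
  set c := u + 1 with hc
  have hmem : Set.Ioo (u / 2) c ∈ nhds u := Ioo_mem_nhds (by linarith) (by linarith)
  have hint1 : IntervalIntegrable (fun l => (Phi α β π l)⁻¹) volume u c := by
    rw [intervalIntegrable_iff_integrableOn_Ioc_of_le (by linarith)]
    exact (int_f_Ioi hα hβ hsupp hint hΦne hH2 hu).mono_set Set.Ioc_subset_Ioi_self
  have hmeas : StronglyMeasurableAtFilter (fun l => (Phi α β π l)⁻¹) (nhds u) volume :=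
    ContinuousOn.stronglyMeasurableAtFilter isOpen_Ioi
      (f_contOn hα hβ hsupp hint hΦne) u hu
  have hder : HasDerivAt (fun w => (∫ l in w..c, (Phi α β π l)⁻¹) + Gfun α β π c)
      (-(Phi α β π u)⁻¹) u := by
    have := intervalIntegral.integral_hasDerivAt_left hint1 hmeas
      (f_contAt hα hβ hsupp hint hΦne hu)
    simpa using this.add_const (Gfun α β π c)
  apply hder.congr_of_eventuallyEq
  filter_upwards [hmem] with w hw
  exact G_sub hα hβ hsupp hint hΦne hH2 (by linarith [hw.1, hu]) (le_of_lt hw.2)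

lemma G_tendsto_zero : Tendsto (Gfun α β π) atTop (nhds 0) := by
  have h1 : Tendsto (fun u => ∫ l in (1:ℝ)..u, (Phi α β π l)⁻¹) atTop
      (nhds (Gfun α β π 1)) :=
    intervalIntegral_tendsto_integral_Ioi 1
      (int_f_Ioi hα hβ hsupp hint hΦne hH2 one_pos) tendsto_id
  have h2 : Tendsto (fun u => Gfun α β π 1 - ∫ l in (1:ℝ)..u, (Phi α β π l)⁻¹) atTop
      (nhds 0) := by
    have := (tendsto_const_nhds (x := Gfun α β π 1) (f := atTop)).sub h1
    rwa [sub_self] at this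
  apply h2.congr'
  filter_upwards [eventually_ge_atTop (1:ℝ)] with u hu1
  have := G_sub hα hβ hsupp hint hΦne hH2 one_pos hu1
  linarith

lemma G_lower {u : ℝ} (hu : 0 < u) (hu1 : u < 1) :
    Real.log (1 / u) / (α + β + ∫ θ, min θ (θ ^ 2) ∂π) ≤ Gfun α β π u := by
  set C := α + β + ∫ θ, min θ (θ ^ 2) ∂π with hCdef
  have hC : 0 < C := C_pos hα hβ hsupp hint hΦne
  have hmono : (∫ l in Set.Ioc u 1, (C * l)⁻¹) ≤ ∫ l in Set.Ioc u 1, (Phi α β π l)⁻¹ := by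
    apply setIntegral_mono_on
    · have : IntegrableOn (fun l => (C * l)⁻¹) (Set.Icc u 1) := by
        apply ContinuousOn.integrableOn_Icc
        intro l hl
        exact ((continuous_const.mul continuous_id).continuousAt.inv₀
          (ne_of_gt (mul_pos hC (lt_of_lt_of_le hu hl.1)))).continuousWithinAt
      exact this.mono_set Set.Ioc_subset_Icc_self
    · exact (int_f_Ioi hα hβ hsupp hint hΦne hH2 hu).mono_set Set.Ioc_subset_Ioi_self
    · exact measurableSet_Ioc
    · intro l hl
      exact inv_anti₀ (Phi_pos hα hβ hsupp hint hΦne (lt_trans hu hl.1))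
        (Phi_le hβ hsupp hint (lt_trans hu hl.1) hl.2)
  have hcomp : (∫ l in Set.Ioc u 1, (C * l)⁻¹) = Real.log (1 / u) / C := by
    rw [← intervalIntegral.integral_of_le hu1.le]
    have : ∀ l : ℝ, (C * l)⁻¹ = C⁻¹ * l⁻¹ := fun l => by rw [mul_inv]
    simp_rw [this]
    rw [intervalIntegral.integral_const_mul, integral_inv_of_pos hu one_pos]
    field_simp
  have hG := G_sub hα hβ hsupp hint hΦne hH2 hu hu1.le
  have hG1 := G_pos hα hβ hsupp hint hΦne hH2 (u := 1) one_pos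
  rw [intervalIntegral.integral_of_le hu1.le] at hG
  rw [hcomp] at hmono
  linarith

omit hH2

lemma not_int_near_zero :
    ¬ IntegrableOn (fun l => (Phi α β π l)⁻¹) (Set.Ioc 0 1) := by
  intro h
  set C := α + β + ∫ θ, min θ (θ ^ 2) ∂π with hCdef
  have hC : 0 < C := C_pos hα hβ hsupp hint hΦne
  have h2 : IntegrableOn (fun l => (C * l)⁻¹) (Set.Ioc 0 1) := by
    apply Integrable.mono' h
    · exact ((measurable_id.const_mul C).inv).aestronglyMeasurable
    · rw [ae_restrict_iff' measurableSet_Ioc]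
      filter_upwards with l hl
      have hPl := Phi_pos hα hβ hsupp hint hΦne hl.1
      rw [Real.norm_eq_abs, abs_of_nonneg (le_of_lt (inv_pos.2 (mul_pos hC hl.1)))]
      exact inv_anti₀ hPl (Phi_le hβ hsupp hint hl.1 hl.2)
  have h3 : IntegrableOn (fun l : ℝ => l⁻¹) (Set.Ioc 0 1) := by
    have h4 := h2.const_mul C
    have heq : (fun l : ℝ => C * (C * l)⁻¹) = fun l : ℝ => l⁻¹ := by
      funext l
      rw [mul_inv, ← mul_assoc, mul_inv_cancel₀ (ne_of_gt hC), one_mul]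
    rwa [heq] at h4
  set K := ∫ l in Set.Ioc (0:ℝ) 1, l⁻¹ with hK
  have hKnn : 0 ≤ K :=
    setIntegral_nonneg measurableSet_Ioc (fun l hl => inv_nonneg.2 hl.1.le)
  set u := Real.exp (-(K + 1)) with hu
  have hu0 : 0 < u := Real.exp_pos _
  have hu1 : u < 1 := by
    rw [hu]
    have h5 : Real.exp (-(K + 1)) < Real.exp 0 := Real.exp_lt_exp.2 (by linarith)
    simpa using h5
  have hle : (∫ l in Set.Ioc u 1, l⁻¹) ≤ K := by
    apply setIntegral_mono_set h3
    · filter_upwards [ae_restrict_mem measurableSet_Ioc] with l hl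
      simpa using inv_nonneg.2 hl.1.le
    · exact (Set.Ioc_subset_Ioc_left hu0.le).eventuallyLE
  have heq : (∫ l in Set.Ioc u 1, l⁻¹) = K + 1 := by
    rw [← intervalIntegral.integral_of_le hu1.le, integral_inv_of_pos hu0 one_pos, hu]
    rw [one_div, ← Real.exp_neg, neg_neg, Real.log_exp]
  linarith

end G
section G2
variable {α β : ℝ} {π : Measure ℝ}
  (hα : 0 ≤ α) (hβ : 0 ≤ β) (hsupp : π (Set.Iic 0) = 0)
  (hint : Integrable (fun θ => min θ (θ ^ 2)) π)
  (hΦne : ∃ l : ℝ, 0 ≤ l ∧ Phi α β π l ≠ 0)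
  (hH2 : IntegrableOn (fun l => (Phi α β π l)⁻¹) (Set.Ioi 1))

include hα hβ hsupp hint hΦne hH2

lemma exists_v {t : ℝ} (ht : 0 < t) : ∃ u, 0 < u ∧ Gfun α β π u = t := by
  set C := α + β + ∫ θ, min θ (θ ^ 2) ∂π with hCdef
  have hC : 0 < C := C_pos hα hβ hsupp hint hΦne
  obtain ⟨b, hb1, hbt⟩ : ∃ b, 1 ≤ b ∧ Gfun α β π b < t := by
    have h1 : ∀ᶠ u in atTop, Gfun α β π u < t :=
      (G_tendsto_zero hα hβ hsupp hint hΦne hH2).eventually_lt_const ht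
    exact ((h1.and (eventually_ge_atTop 1)).exists).imp fun b hb => ⟨hb.2, hb.1⟩
  set a := min (1/2) (Real.exp (-(C * t))) with ha
  have ha0 : 0 < a := lt_min (by norm_num) (Real.exp_pos _)
  have ha1 : a < 1 := lt_of_le_of_lt (min_le_left _ _) (by norm_num)
  have hat : t ≤ Gfun α β π a := by
    have hlog : C * t ≤ Real.log (1 / a) := by
      have h2 : a ≤ Real.exp (-(C * t)) := min_le_right _ _
      have h3 : 1 / Real.exp (-(C * t)) ≤ 1 / a := one_div_le_one_div_of_le ha0 h2
      calc C * t = Real.log (1 / Real.exp (-(C * t))) := by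
            rw [one_div, ← Real.exp_neg, Real.log_exp, neg_neg]
        _ ≤ Real.log (1 / a) := Real.log_le_log (by positivity) h3
    have hGl := G_lower hα hβ hsupp hint hΦne hH2 ha0 ha1
    rw [← hCdef] at hGl
    calc t = (C * t) / C := by field_simp
      _ ≤ Real.log (1 / a) / C := (div_le_div_iff_of_pos_right hC).2 hlog
      _ ≤ Gfun α β π a := hGl
  have hab : a ≤ b := le_trans ha1.le hb1
  have hcont : ContinuousOn (Gfun α β π) (Set.Icc a b) := fun u hu =>
    ((hasDerivAt_G hα hβ hsupp hint hΦne hH2 (lt_of_lt_of_le ha0 hu.1)).continuousAt).continuousWithinAt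
  obtain ⟨u, hu, hGu⟩ := intermediate_value_Icc' hab hcont ⟨hbt.le, hat⟩
  exact ⟨u, lt_of_lt_of_le ha0 hu.1, hGu⟩

lemma log_ratio {a b : ℝ} (ha : 0 < a) (hab : a ≤ b) :
    Psi α β π a * (Gfun α β π a - Gfun α β π b)
      ≤ Real.log (Phi α β π b) - Real.log (Phi α β π a) ∧
    Real.log (Phi α β π b) - Real.log (Phi α β π a)
      ≤ Psi α β π b * (Gfun α β π a - Gfun α β π b) := by
  have hW : ∀ (c l : ℝ), 0 < l →
      HasDerivAt (fun z => Real.log (Phi α β π z) + c * Gfun α β π z)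
        (Psi α β π l / Phi α β π l + c * -(Phi α β π l)⁻¹) l := by
    intro c l hl
    exact ((hasDerivAt_Phi hsupp hint hl).log
      (ne_of_gt (Phi_pos hα hβ hsupp hint hΦne hl))).add
      ((hasDerivAt_G hα hβ hsupp hint hΦne hH2 hl).const_mul c)
  constructor
  · have hm : MonotoneOn (fun z => Real.log (Phi α β π z) + Psi α β π a * Gfun α β π z)
        (Set.Icc a b) := by
      apply monotoneOn_of_deriv_nonneg (convex_Icc a b)
      · intro l hl
        exact ((hW _ l (lt_of_lt_of_le ha hl.1)).continuousAt).continuousWithinAt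
      · intro l hl
        rw [interior_Icc] at hl
        exact ((hW _ l (lt_trans ha hl.1)).differentiableAt).differentiableWithinAt
      · intro l hl
        rw [interior_Icc] at hl
        have hl0 : 0 < l := lt_trans ha hl.1
        rw [(hW _ l hl0).deriv]
        have hP := Phi_pos hα hβ hsupp hint hΦne hl0
        have hmono := Psi_mono (α := α) hβ hsupp hint ha.le hl.1.le
        have hinv : (0:ℝ) ≤ (Phi α β π l)⁻¹ := (inv_pos.2 hP).le
        rw [div_eq_mul_inv]
        nlinarith [mul_le_mul_of_nonneg_right hmono hinv]
    have h := hm (Set.left_mem_Icc.2 hab) (Set.right_mem_Icc.2 hab) hab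
    simp only at h
    rw [mul_sub]; linarith
  · have hm : AntitoneOn (fun z => Real.log (Phi α β π z) + Psi α β π b * Gfun α β π z)
        (Set.Icc a b) := by
      apply antitoneOn_of_deriv_nonpos (convex_Icc a b)
      · intro l hl
        exact ((hW _ l (lt_of_lt_of_le ha hl.1)).continuousAt).continuousWithinAt
      · intro l hl
        rw [interior_Icc] at hl
        exact ((hW _ l (lt_trans ha hl.1)).differentiableAt).differentiableWithinAt
      · intro l hl
        rw [interior_Icc] at hl
        have hl0 : 0 < l := lt_trans ha hl.1
        rw [(hW _ l hl0).deriv]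
        have hP := Phi_pos hα hβ hsupp hint hΦne hl0
        have hmono := Psi_mono (α := α) hβ hsupp hint hl0.le hl.2.le
        have hinv : (0:ℝ) ≤ (Phi α β π l)⁻¹ := (inv_pos.2 hP).le
        rw [div_eq_mul_inv]
        nlinarith [mul_le_mul_of_nonneg_right hmono hinv]
    have h := hm (Set.left_mem_Icc.2 hab) (Set.right_mem_Icc.2 hab) hab
    simp only at h
    rw [mul_sub]; linarith

end G2
/-- Analytic core of Proposition 4.8: under Assumption H2 in the (sub)critical
case, the function `v̄` defined by `∫_{v̄(t)}^∞ dλ/Φ(λ) = t` exists and is unique,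
is strictly decreasing with `v̄(t) → 0` and `v̄' = -Φ(v̄)`, and the height-density
ratio `h_y(r-t)/h_x(r) = [y e^{-y v̄(r-t)} Φ(v̄(r-t))]/[x e^{-x v̄(r)} Φ(v̄(r))]`
tends to `(y/x) e^{αt}` as `r → ∞`. -/
theorem height_density_ratio_limit
    (α β : ℝ) (hα : 0 ≤ α) (hβ : 0 ≤ β) (π : Measure ℝ)
    (hsupp : π (Set.Iic 0) = 0) (hσ : SigmaFinite π)
    (hint : Integrable (fun θ => min θ (θ ^ 2)) π)
    (hΦne : ∃ l : ℝ, 0 ≤ l ∧ Phi α β π l ≠ 0)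
    (hH2 : IntegrableOn (fun l => (Phi α β π l)⁻¹) (Set.Ioi 1)) :
    -- note: Φ(λ) > 0 for all λ > 0 and ∫_{0+}^1 dλ/Φ(λ) = ∞
    (∀ l : ℝ, 0 < l → 0 < Phi α β π l) ∧
    ¬ IntegrableOn (fun l => (Phi α β π l)⁻¹) (Set.Ioc 0 1) ∧
    ∃ v : ℝ → ℝ,
      (∀ t : ℝ, 0 < t →
        0 < v t ∧ (∫ l in Set.Ioi (v t), (Phi α β π l)⁻¹) = t) ∧
      (∀ w : ℝ → ℝ,
        (∀ t : ℝ, 0 < t →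
          0 < w t ∧ (∫ l in Set.Ioi (w t), (Phi α β π l)⁻¹) = t) →
        ∀ t : ℝ, 0 < t → w t = v t) ∧
      StrictAntiOn v (Set.Ioi 0) ∧
      Tendsto v atTop (nhds 0) ∧
      (∀ t : ℝ, 0 < t → HasDerivAt v (-(Phi α β π (v t))) t) ∧
      (∀ t : ℝ, 0 < t → ∀ x : ℝ, 0 < x → ∀ y : ℝ, 0 < y →
        Tendsto
          (fun r : ℝ =>
            (y * Real.exp (-(y * v (r - t))) * Phi α β π (v (r - t))) /
              (x * Real.exp (-(x * v r)) * Phi α β π (v r)))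
          atTop (nhds (y / x * Real.exp (α * t)))) := by
  have hPpos : ∀ l : ℝ, 0 < l → 0 < Phi α β π l :=
    fun l hl => Phi_pos hα hβ hsupp hint hΦne hl
  refine ⟨hPpos, not_int_near_zero hα hβ hsupp hint hΦne, ?_⟩
  have hex : ∀ t : ℝ, 0 < t → ∃ u, 0 < u ∧ Gfun α β π u = t :=
    fun t ht => exists_v hα hβ hsupp hint hΦne hH2 ht
  set v : ℝ → ℝ := fun t => if ht : 0 < t then (hex t ht).choose else 1 with hvdef
  have hv : ∀ t : ℝ, 0 < t → 0 < v t ∧ Gfun α β π (v t) = t := by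
    intro t ht
    have : v t = (hex t ht).choose := by simp only [hvdef, dif_pos ht]
    rw [this]
    exact (hex t ht).choose_spec
  have hGanti := G_strictAnti hα hβ hsupp hint hΦne hH2
  -- strict antitonicity of v
  have hvanti : StrictAntiOn v (Set.Ioi 0) := by
    intro s hs r hr hsr
    simp only [Set.mem_Ioi] at hs hr
    by_contra hcon
    push_neg at hcon
    have h1 := hv s hs
    have h2 := hv r hr
    rcases eq_or_lt_of_le hcon with he | hlt
    · have : s = r := by rw [← h1.2, ← h2.2, he]
      exact absurd this (ne_of_lt hsr)
    · have hGG := hGanti (Set.mem_Ioi.2 h1.1) (Set.mem_Ioi.2 h2.1) hlt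
      rw [h1.2, h2.2] at hGG
      exact absurd hsr (not_lt.2 hGG.le)
  -- tendsto zero
  have hvz : Tendsto v atTop (nhds 0) := by
    rw [Metric.tendsto_atTop]
    intro ε hε
    set w : ℝ := min (ε / 2) (1 / 2) with hw
    have hw0 : 0 < w := lt_min (by linarith) (by norm_num)
    refine ⟨max (Gfun α β π w) 1, fun r hr => ?_⟩
    have hr1 : (1:ℝ) ≤ r := le_trans (le_max_right _ _) hr
    have hr0 : 0 < r := lt_of_lt_of_le one_pos hr1
    have hrG : Gfun α β π w ≤ r := le_trans (le_max_left _ _) hr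
    have hvw : v r ≤ w := by
      by_contra hcon
      push_neg at hcon
      have := hGanti (Set.mem_Ioi.2 hw0) (Set.mem_Ioi.2 (hv r hr0).1) hcon
      rw [(hv r hr0).2] at this
      linarith
    rw [Real.dist_eq, sub_zero, abs_of_pos (hv r hr0).1]
    have := min_le_left (ε / 2) (1 / 2)
    linarith
  -- continuity
  have hvcont : ∀ t : ℝ, 0 < t → ContinuousAt v t := by
    intro t ht
    rw [Metric.continuousAt_iff]
    intro ε hε
    have hvt := hv t ht
    set ε' : ℝ := min (ε / 2) (v t / 2) with hε'
    have hε'0 : 0 < ε' := lt_min (by linarith) (by linarith [hvt.1])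
    have hp1 : 0 < v t - ε' := by
      have := min_le_right (ε / 2) (v t / 2); linarith [hvt.1]
    have hp2 : 0 < v t + ε' := by linarith [hvt.1]
    set s₁ := Gfun α β π (v t + ε') with hs₁def
    set s₂ := Gfun α β π (v t - ε') with hs₂def
    have hs1 : s₁ < t := by
      have := hGanti (Set.mem_Ioi.2 hvt.1) (Set.mem_Ioi.2 hp2) (by linarith)
      rw [hvt.2] at this; exact this
    have hs2 : t < s₂ := by
      have := hGanti (Set.mem_Ioi.2 hp1) (Set.mem_Ioi.2 hvt.1) (by linarith)
      rw [hvt.2] at this; exact this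
    have hs1pos : 0 < s₁ := G_pos hα hβ hsupp hint hΦne hH2 hp2
    refine ⟨min (t - s₁) (s₂ - t), lt_min (by linarith) (by linarith), ?_⟩
    intro z hz
    rw [Real.dist_eq, abs_lt] at hz
    have hz1 : s₁ < z := by
      have := min_le_left (t - s₁) (s₂ - t); linarith
    have hz2 : z < s₂ := by
      have := min_le_right (t - s₁) (s₂ - t); linarith
    have hz0 : 0 < z := lt_trans hs1pos hz1
    have hvzt := hv z hz0
    have hb1 : v z < v t + ε' := by
      by_contra hcon
      push_neg at hcon
      have := (hGanti.antitoneOn (Set.mem_Ioi.2 hp2) (Set.mem_Ioi.2 hvzt.1) hcon)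
      rw [hvzt.2] at this
      linarith
    have hb2 : v t - ε' < v z := by
      by_contra hcon
      push_neg at hcon
      have := (hGanti.antitoneOn (Set.mem_Ioi.2 hvzt.1) (Set.mem_Ioi.2 hp1) hcon)
      rw [hvzt.2] at this
      linarith
    rw [Real.dist_eq, abs_lt]
    have := min_le_left (ε / 2) (v t / 2)
    constructor <;> linarith
  -- derivative
  have hvd : ∀ t : ℝ, 0 < t → HasDerivAt v (-(Phi α β π (v t))) t := by
    intro t ht
    have h := HasDerivAt.of_local_left_inverse (hvcont t ht)
      (hasDerivAt_G hα hβ hsupp hint hΦne hH2 (hv t ht).1)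
      (neg_ne_zero.2 (inv_ne_zero (ne_of_gt (hPpos _ (hv t ht).1))))
      (by filter_upwards [Ioi_mem_nhds ht] with z hz; exact (hv z hz).2)
    rwa [inv_neg, inv_inv] at h
  refine ⟨v, fun t ht => hv t ht, ?_, hvanti, hvz, hvd, ?_⟩
  · -- uniqueness
    intro w hw t ht
    apply hGanti.injOn (Set.mem_Ioi.2 (hw t ht).1) (Set.mem_Ioi.2 (hv t ht).1)
    unfold Gfun
    rw [(hw t ht).2]
    exact (hv t ht).2.symm
  -- the ratio limit
  intro t ht x hx y hy
  have hshift : Tendsto (fun r : ℝ => r - t) atTop atTop :=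
    (tendsto_atTop_add_const_right atTop (-t) tendsto_id).congr
      (fun r => (sub_eq_add_neg r t).symm)
  have hbz : Tendsto (fun r => v (r - t)) atTop (nhds 0) := hvz.comp hshift
  have hvIoi : Tendsto v atTop (nhdsWithin 0 (Set.Ioi 0)) := by
    rw [tendsto_nhdsWithin_iff]
    refine ⟨hvz, ?_⟩
    filter_upwards [eventually_gt_atTop 0] with r hr
    exact Set.mem_Ioi.2 (hv r hr).1
  have hbIoi : Tendsto (fun r => v (r - t)) atTop (nhdsWithin 0 (Set.Ioi 0)) :=
    hvIoi.comp hshift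
  have hPsiA : Tendsto (fun r => Psi α β π (v r)) atTop (nhds α) :=
    (Psi_tendsto hsupp hint).comp hvIoi
  have hPsiB : Tendsto (fun r => Psi α β π (v (r - t))) atTop (nhds α) :=
    (Psi_tendsto hsupp hint).comp hbIoi
  have hbounds : ∀ᶠ r in atTop,
      Psi α β π (v r) * t ≤
        Real.log (Phi α β π (v (r - t))) - Real.log (Phi α β π (v r)) ∧
      Real.log (Phi α β π (v (r - t))) - Real.log (Phi α β π (v r)) ≤
        Psi α β π (v (r - t)) * t := by
    filter_upwards [eventually_gt_atTop t] with r hr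
    have hrt : 0 < r - t := sub_pos.2 hr
    have hr0 : 0 < r := ht.trans hr
    have ha := hv r hr0
    have hb := hv (r - t) hrt
    have hab : v r ≤ v (r - t) :=
      (hvanti (Set.mem_Ioi.2 hrt) (Set.mem_Ioi.2 hr0) (by linarith)).le
    obtain ⟨h1, h2⟩ := log_ratio hα hβ hsupp hint hΦne hH2 ha.1 hab
    rw [ha.2, hb.2, show r - (r - t) = t by ring] at h1 h2
    exact ⟨h1, h2⟩
  have hD : Tendsto
      (fun r => Real.log (Phi α β π (v (r - t))) - Real.log (Phi α β π (v r)))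
      atTop (nhds (α * t)) :=
    tendsto_of_tendsto_of_tendsto_of_le_of_le' (hPsiA.mul_const t) (hPsiB.mul_const t)
      (hbounds.mono fun r h => h.1) (hbounds.mono fun r h => h.2)
  have hE : Tendsto
      (fun r => Real.exp
        (Real.log (Phi α β π (v (r - t))) - Real.log (Phi α β π (v r))))
      atTop (nhds (Real.exp (α * t))) :=
    (Real.continuous_exp.tendsto _).comp hD
  have hF : Tendsto (fun r => Real.exp (x * v r - y * v (r - t))) atTop (nhds 1) := by
    have h0 : Tendsto (fun r => x * v r - y * v (r - t)) atTop (nhds 0) := by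
      have h1 := (hvz.const_mul x).sub (hbz.const_mul y)
      have e : x * (0:ℝ) - y * 0 = 0 := by ring
      rwa [e] at h1
    have := (Real.continuous_exp.tendsto 0).comp h0
    rwa [Real.exp_zero] at this
  have hfinal := (tendsto_const_nhds (x := y / x) (f := atTop)).mul (hF.mul hE)
  rw [show (y / x) * (1 * Real.exp (α * t)) = y / x * Real.exp (α * t) by ring] at hfinal
  apply hfinal.congr'
  filter_upwards [eventually_gt_atTop t] with r hr
  have hrt : 0 < r - t := sub_pos.2 hr
  have hr0 : 0 < r := ht.trans hr
  have hPa := hPpos _ (hv r hr0).1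
  have hPb := hPpos _ (hv (r - t) hrt).1
  rw [Real.exp_sub, Real.exp_sub, Real.exp_log hPa, Real.exp_log hPb,
    Real.exp_neg, Real.exp_neg]
  field_simp
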